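/- arXiv:2110.03401 — 7 statements merged into one kernel-verified Lean document; each statement's English description precedes it below -/
import Mathlib

section
/- Let f₁ and f₂ be multiplicative functions ℕ → ℂ such that, for j = 1,2, f_j satisfies with respect to an integer m_j ≥ 1 the conditions: (i) for some prime q dividing m_j, ∑_{k=0}^∞ f_j(q^k)/q^k = 0; (ii) for each prime power p^a exactly dividing m_j, f_j(p^k) = f_j(p^a) for all k ≥ a; (iii) for each prime p with gcd(p,m_j) = 1, f_j(p^k) = 1 for all k ≥ 1. Let g = f₁ ∗ f₂ ∗ μ ∗ μ, where μ is the Möbius function. Then the series ∑_{n=1}^∞ g(n)/n and ∑_{n=1}^∞ g(n)·log n / n both converge absolutely and both equal 0. -/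
/-- `f` is multiplicative: `f 1 = 1` and `f (m*n) = f m * f n` for coprime `m, n`. -/
def IsMultiplicativeFn (f : ℕ → ℂ) : Prop :=
  f 1 = 1 ∧ ∀ m n : ℕ, Nat.Coprime m n → f (m * n) = f m * f n

/-- Conditions i-iii of Theorem 2 with respect to the integer `m`. -/
def SatisfiesConds (f : ℕ → ℂ) (m : ℕ) : Prop :=
  (∃ q : ℕ, q.Prime ∧ q ∣ m ∧ ∑' k : ℕ, f (q ^ k) / (q : ℂ) ^ k = 0) ∧
  (∀ p a : ℕ, p.Prime → p ^ a ∣ m → ¬ p ^ (a + 1) ∣ m →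
    ∀ k : ℕ, a ≤ k → f (p ^ k) = f (p ^ a)) ∧
  (∀ p : ℕ, p.Prime → Nat.Coprime p m → ∀ k : ℕ, 1 ≤ k → f (p ^ k) = 1)

/-- Dirichlet convolution. -/
noncomputable def dconv (f g : ℕ → ℂ) : ℕ → ℂ :=
  fun n => ∑ d ∈ n.divisors, f d * g (n / d)

/-- The Möbius function, complex valued. -/
def moebiusC : ℕ → ℂ := fun n => ((ArithmeticFunction.moebius n : ℤ) : ℂ)

open ArithmeticFunction Finset


noncomputable def toAF (f : ℕ → ℂ) : ArithmeticFunction ℂ :=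
  ⟨fun n => if n = 0 then 0 else f n, if_pos rfl⟩

lemma toAF_apply (f : ℕ → ℂ) {n : ℕ} (hn : n ≠ 0) : toAF f n = f n := if_neg hn

lemma toAF_mult {f : ℕ → ℂ} (hf : IsMultiplicativeFn f) : (toAF f).IsMultiplicative := by
  constructor
  · simpa [toAF] using hf.1
  · intro m n hmn
    rcases eq_or_ne m 0 with rfl | hm
    · have : n = 1 := by simpa using hmn
      subst this; simp [toAF, hf.1]
    rcases eq_or_ne n 0 with rfl | hn
    · have : m = 1 := by simpa using hmn
      subst this; simp [toAF, hf.1]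
    rw [toAF_apply _ (Nat.mul_ne_zero hm hn), toAF_apply _ hm, toAF_apply _ hn]
    exact hf.2 m n hmn

lemma dconv_eq (f g : ℕ → ℂ) (n : ℕ) : dconv f g n = (toAF f * toAF g) n := by
  rcases eq_or_ne n 0 with rfl | hn
  · simp [dconv]
  · rw [ArithmeticFunction.mul_apply, Nat.sum_divisorsAntidiagonal (fun d e => toAF f d * toAF g e)]
    refine Finset.sum_congr rfl fun d hd => ?_
    obtain ⟨hdn, hn0⟩ := Nat.mem_divisors.mp hd
    have h2 : n / d ≠ 0 :=
      (Nat.div_pos (Nat.le_of_dvd (Nat.pos_of_ne_zero hn) hdn) (Nat.pos_of_mem_divisors hd)).ne'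
    rw [toAF_apply _ (Nat.pos_of_mem_divisors hd).ne', toAF_apply _ h2]

lemma toAF_dconv (f g : ℕ → ℂ) : toAF (dconv f g) = toAF f * toAF g := by
  ext n
  rcases eq_or_ne n 0 with rfl | hn
  · simp
  · rw [toAF_apply _ hn, dconv_eq]

lemma toAF_moebiusC : toAF moebiusC = (ArithmeticFunction.moebius : ArithmeticFunction ℤ) := by
  ext n
  rcases eq_or_ne n 0 with rfl | hn
  · simp [moebiusC]
  · rw [toAF_apply _ hn]; simp [moebiusC]

lemma mul_moebius_primePow (f : ℕ → ℂ) {p : ℕ} (hp : p.Prime) {k : ℕ} (hk : 1 ≤ k) :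
    (toAF f * (moebius : ArithmeticFunction ℂ)) (p ^ k) = f (p ^ k) - f (p ^ (k - 1)) := by
  rw [mul_apply,
    Nat.sum_divisorsAntidiagonal (fun d e => toAF f d * (moebius : ArithmeticFunction ℂ) e),
    Nat.sum_divisors_prime_pow hp]
  have key : ∀ i ∈ range (k+1), toAF f (p^i) * (moebius : ArithmeticFunction ℂ) (p^k / p^i)
      = (if i = k then f (p^k) else 0) + (if i = k-1 then -f (p^(k-1)) else 0) := by
    intro i hi
    rw [mem_range] at hi
    have hik : i ≤ k := by omega
    have hdiv : p^k / p^i = p^(k-i) := Nat.pow_div hik hp.pos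
    rw [hdiv, toAF_apply _ (pow_ne_zero _ hp.pos.ne')]
    rcases eq_or_ne i k with rfl | h1
    · rw [Nat.sub_self]
      simp [if_neg (by omega : ¬ i = i - 1)]
    · rcases eq_or_ne i (k-1) with rfl | h2
      · have : k - (k-1) = 1 := by omega
        rw [this, if_neg h1, if_pos rfl]
        rw [intCoe_apply, pow_one, moebius_apply_prime hp]
        push_cast; ring
      · have h3 : k - i ≠ 0 := by omega
        have h4 : k - i ≠ 1 := by omega
        rw [intCoe_apply, moebius_apply_prime_pow hp h3, if_neg h4]
        simp [h1, h2]
  rw [Finset.sum_congr rfl key, Finset.sum_add_distrib,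
    Finset.sum_ite_eq' (range (k+1)) k, Finset.sum_ite_eq' (range (k+1)) (k-1)]
  simp [mem_range, Nat.lt_succ_iff, sub_eq_add_neg, hk, Nat.sub_le]


lemma H_vanish {f : ℕ → ℂ} {m : ℕ} (hm : m ≠ 0)
    (hcond : ∀ p a : ℕ, p.Prime → p ^ a ∣ m → ¬ p ^ (a + 1) ∣ m →
      ∀ k : ℕ, a ≤ k → f (p ^ k) = f (p ^ a))
    {p k : ℕ} (hp : p.Prime) (hk : m.factorization p < k) :
    (toAF f * (moebius : ArithmeticFunction ℂ)) (p ^ k) = 0 := by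
  set a := m.factorization p with ha
  have h1 : p ^ a ∣ m := Nat.ordProj_dvd m p
  have h2 : ¬ p ^ (a + 1) ∣ m := Nat.pow_succ_factorization_not_dvd hm hp
  rw [mul_moebius_primePow f hp (by omega), hcond p a hp h1 h2 k (by omega),
    hcond p a hp h1 h2 (k-1) (by omega), sub_self]

lemma H_support {f : ℕ → ℂ} (hmul : IsMultiplicativeFn f) {m : ℕ} (hm : m ≠ 0)
    (hcond : ∀ p a : ℕ, p.Prime → p ^ a ∣ m → ¬ p ^ (a + 1) ∣ m →
      ∀ k : ℕ, a ≤ k → f (p ^ k) = f (p ^ a))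
    {d : ℕ} (hd : ¬ d ∣ m) : (toAF f * (moebius : ArithmeticFunction ℂ)) d = 0 := by
  have Hmult : (toAF f * (moebius : ArithmeticFunction ℂ)).IsMultiplicative :=
    (toAF_mult hmul).mul isMultiplicative_moebius.intCast
  rcases eq_or_ne d 0 with rfl | hd0
  · simp
  rw [Hmult.multiplicative_factorization _ hd0]
  have hle : ¬ d.factorization ≤ m.factorization := fun h =>
    hd ((Nat.factorization_le_iff_dvd hd0 hm).mp h)
  obtain ⟨p, hp⟩ : ∃ p, m.factorization p < d.factorization p := by
    by_contra h
    push_neg at h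
    exact hle (Finsupp.le_def.mpr fun p => h p)
  have hpmem : p ∈ d.factorization.support := by
    rw [Finsupp.mem_support_iff]; omega
  have hpp : p.Prime := Nat.prime_of_mem_primeFactors (by
    rwa [Nat.support_factorization] at hpmem)
  exact Finset.prod_eq_zero hpmem (H_vanish hm hcond hpp hp)

lemma euler_factor_zero {f : ℕ → ℂ} (hf1 : f 1 = 1) {q : ℕ} (hq : q.Prime) (a : ℕ)
    (hconst : ∀ k, a ≤ k → f (q^k) = f (q^a))
    (hsum : ∑' k : ℕ, f (q ^ k) / (q : ℂ) ^ k = 0) :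
    ∑ i ∈ range (a+1), (toAF f * (moebius : ArithmeticFunction ℂ)) (q^i) / (q:ℂ)^i = 0 := by
  set u : ℕ → ℂ := fun k => f (q^k) / (q:ℂ)^k with hu
  set c : ℂ := f (q^a) with hc
  set r : ℂ := (q:ℂ)⁻¹ with hr
  have hq0 : (q:ℂ) ≠ 0 := by exact_mod_cast hq.pos.ne'
  have hrn : ‖r‖ < 1 := by
    rw [hr, norm_inv, Complex.norm_natCast, inv_lt_one_iff₀]
    right
    exact_mod_cast hq.one_lt
  have hgeo : Summable (fun k : ℕ => c * r ^ k) :=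
    (summable_geometric_of_norm_lt_one hrn).mul_left _
  have hucr : ∀ k, a ≤ k → u k = c * r ^ k := by
    intro k hk
    rw [hu]
    simp only [hconst k hk, hc, hr, div_eq_mul_inv, inv_pow]
  have husum : Summable u := by
    have h1 : Summable (fun k => u k - c * r ^ k) := by
      apply summable_of_ne_finset_zero (s := range a)
      intro k hk
      rw [mem_range, not_lt] at hk
      rw [hucr k hk, sub_self]
    simpa using h1.add hgeo
  have htail : ∑' k : ℕ, u (k + a) = c * r ^ a * (1 - r)⁻¹ := by
    have heq : ∀ k : ℕ, u (k + a) = c * r ^ a * r ^ k := by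
      intro k
      rw [hucr (k + a) (by omega), pow_add]
      ring
    rw [tsum_congr heq, tsum_mul_left, tsum_geometric_of_norm_lt_one hrn]
  have hPa : ∑ i ∈ range a, u i = -(c * r ^ a * (1 - r)⁻¹) := by
    have h := husum.sum_add_tsum_nat_add a
    rw [htail, hsum] at h
    linear_combination h
  have h1r : (1:ℂ) - r ≠ 0 := by
    intro h
    rw [sub_eq_zero] at h
    rw [← h] at hrn
    simp at hrn
  have hterm : ∀ i ∈ range (a+1),
      (toAF f * (moebius : ArithmeticFunction ℂ)) (q^i) / (q:ℂ)^i
        = (if i = 0 then u 0 else u i - r * u (i-1)) := by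
    intro i _
    rcases eq_or_ne i 0 with rfl | hi
    · rw [if_pos rfl]
      have hH1 : (toAF f * (moebius : ArithmeticFunction ℂ)) 1 = 1 := by
        rw [ArithmeticFunction.mul_apply]
        simp [toAF_apply f one_ne_zero, hf1]
      rw [pow_zero, hH1, hu]
      norm_num [hf1]
    · rw [if_neg hi, mul_moebius_primePow f hq (by omega)]
      have hqi : (q:ℂ)^i = (q:ℂ) * (q:ℂ)^(i-1) := by
        conv_lhs => rw [show i = (i-1)+1 by omega]
        ring
      show _ = f (q^i) / (q:ℂ)^i - (q:ℂ)⁻¹ * (f (q^(i-1)) / (q:ℂ)^(i-1))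
      have hp1 : (q:ℂ)^(i-1) ≠ 0 := pow_ne_zero _ hq0
      rw [hqi]
      field_simp
  rw [Finset.sum_congr rfl hterm]
  have hsplit : ∑ i ∈ range (a+1), (if i = 0 then u 0 else u i - r * u (i-1)) =
      (∑ i ∈ range (a+1), u i) - r * ∑ i ∈ range a, u i := by
    rw [Finset.sum_range_succ' (fun i => if i = 0 then u 0 else u i - r * u (i-1))]
    simp only [if_false, if_pos rfl, Nat.add_sub_cancel, Nat.succ_ne_zero, ite_false]
    rw [Finset.sum_sub_distrib, ← Finset.mul_sum, Finset.sum_range_succ' u]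
    simp only [if_true]
    ring
  rw [hsplit, Finset.sum_range_succ, hPa, hucr a le_rfl]
  field_simp
  ring

lemma sum_divisors_zero {f : ℕ → ℂ} (hmul : IsMultiplicativeFn f) {m : ℕ} (hm : m ≠ 0)
    (hcond : SatisfiesConds f m) :
    ∑ d ∈ m.divisors, (toAF f * (moebius : ArithmeticFunction ℂ)) d / (d : ℂ) = 0 := by
  obtain ⟨q, hq, hqm, hqsum⟩ := hcond.1
  set H := toAF f * (moebius : ArithmeticFunction ℂ) with hH
  have Hmult : H.IsMultiplicative := (toAF_mult hmul).mul isMultiplicative_moebius.intCast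
  set K : ArithmeticFunction ℂ := ⟨fun d => H d / d, by simp⟩ with hK
  have hKapp : ∀ d, K d = H d / d := fun d => rfl
  have Kmult : K.IsMultiplicative := by
    constructor
    · simp [hKapp, Hmult.map_one]
    · intro x y hxy
      rcases eq_or_ne x 0 with rfl | hx
      · have : y = 1 := by simpa using hxy
        subst this
        simp [hKapp, Hmult.map_one]
      rcases eq_or_ne y 0 with rfl | hy
      · have : x = 1 := by simpa using hxy
        subst this
        simp [hKapp, Hmult.map_one]
      rw [hKapp, hKapp, hKapp, Hmult.map_mul_of_coprime hxy]
      have hx' : (x:ℂ) ≠ 0 := Nat.cast_ne_zero.mpr hx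
      have hy' : (y:ℂ) ≠ 0 := Nat.cast_ne_zero.mpr hy
      push_cast
      field_simp
  set T := K * ((ArithmeticFunction.zeta : ArithmeticFunction ℕ) : ArithmeticFunction ℂ) with hT
  have Tmult : T.IsMultiplicative := Kmult.mul isMultiplicative_zeta.natCast
  set a := m.factorization q with ha
  have hdecomp : q ^ a * (m / q ^ a) = m := Nat.ordProj_mul_ordCompl_eq_self m q
  have hcop : Nat.Coprime (q ^ a) (m / q ^ a) :=
    Nat.Coprime.pow_left _ (Nat.coprime_ordCompl hq hm)
  have hTqa : T (q ^ a) = 0 := by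
    rw [hT, coe_mul_zeta_apply, Nat.sum_divisors_prime_pow hq]
    have hcongr : ∀ i ∈ range (a+1), K (q^i) = H (q^i) / (q:ℂ)^i := by
      intro i _
      rw [hKapp]
      push_cast
      ring_nf
    rw [Finset.sum_congr rfl hcongr]
    exact euler_factor_zero hmul.1 hq a
      (fun k hk => hcond.2.1 q a hq (Nat.ordProj_dvd m q)
        (Nat.pow_succ_factorization_not_dvd hm hq) k hk) hqsum
  calc ∑ d ∈ m.divisors, H d / (d:ℂ) = T m := by
        rw [hT, coe_mul_zeta_apply]
        exact Finset.sum_congr rfl fun d _ => (hKapp d).symm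
    _ = T (q^a) * T (m / q^a) := by
        conv_lhs => rw [← hdecomp]
        exact Tmult.map_mul_of_coprime hcop
    _ = 0 := by rw [hTqa, zero_mul]

lemma lsummable_of_support {x : ℕ → ℂ} {m : ℕ} (hm : m ≠ 0) (hx : ∀ n, ¬ n ∣ m → x n = 0) :
    LSeriesSummable x 1 := by
  apply summable_of_ne_finset_zero (s := m.divisors)
  intro n hn
  rcases eq_or_ne n 0 with rfl | hn0
  · simp
  · rw [LSeries.term_of_ne_zero hn0,
      hx n (fun hdvd => hn (Nat.mem_divisors.mpr ⟨hdvd, hm⟩)), zero_div]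

lemma lseries_eq_sum {x : ℕ → ℂ} {m : ℕ} (hm : m ≠ 0) (hx : ∀ n, ¬ n ∣ m → x n = 0) :
    LSeries x 1 = ∑ d ∈ m.divisors, x d / (d : ℂ) := by
  rw [LSeries, tsum_eq_sum (s := m.divisors) (fun n hn => by
    rcases eq_or_ne n 0 with rfl | hn0
    · simp
    · rw [LSeries.term_of_ne_zero hn0,
        hx n (fun hdvd => hn (Nat.mem_divisors.mpr ⟨hdvd, hm⟩)), zero_div])]
  refine Finset.sum_congr rfl fun d hd => ?_
  rw [LSeries.term_of_ne_zero (Nat.pos_of_mem_divisors hd).ne', Complex.cpow_one]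

lemma tsum_div_eq_lseries {x : ℕ → ℂ} (hx0 : x 0 = 0) :
    ∑' n : ℕ, x n / (n : ℂ) = LSeries x 1 := by
  refine tsum_congr fun n => ?_
  rcases eq_or_ne n 0 with rfl | hn
  · simp [hx0]
  · rw [LSeries.term_of_ne_zero hn, Complex.cpow_one]

lemma mul_support_dvd {x y : ArithmeticFunction ℂ} {m₁ m₂ : ℕ}
    (hx : ∀ n, ¬ n ∣ m₁ → x n = 0) (hy : ∀ n, ¬ n ∣ m₂ → y n = 0) :
    ∀ n, ¬ n ∣ m₁ * m₂ → (x * y) n = 0 := by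
  intro n hn
  rw [ArithmeticFunction.mul_apply]
  apply Finset.sum_eq_zero
  rintro ⟨d, e⟩ hde
  obtain ⟨hmul', hne⟩ := Nat.mem_divisorsAntidiagonal.mp hde
  by_cases hd : d ∣ m₁
  · by_cases he : e ∣ m₂
    · exact absurd (hmul' ▸ mul_dvd_mul hd he) hn
    · rw [hy e he, mul_zero]
  · rw [hx d hd, zero_mul]

theorem stmt_10 (f₁ f₂ : ℕ → ℂ) (m₁ m₂ : ℕ) (hm₁ : 1 ≤ m₁) (hm₂ : 1 ≤ m₂)
    (hmul₁ : IsMultiplicativeFn f₁) (hmul₂ : IsMultiplicativeFn f₂)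
    (h₁ : SatisfiesConds f₁ m₁) (h₂ : SatisfiesConds f₂ m₂) :
    letI g := dconv (dconv (dconv f₁ f₂) moebiusC) moebiusC
    Summable (fun n : ℕ => ‖g n / (n : ℂ)‖) ∧
    Summable (fun n : ℕ => ‖g n * (Real.log n : ℂ) / (n : ℂ)‖) ∧
    ∑' n : ℕ, g n / (n : ℂ) = 0 ∧
    ∑' n : ℕ, g n * (Real.log n : ℂ) / (n : ℂ) = 0 := by
  have hm₁0 : m₁ ≠ 0 := by omega
  have hm₂0 : m₂ ≠ 0 := by omega
  set M : ArithmeticFunction ℂ := ((moebius : ArithmeticFunction ℤ) : ArithmeticFunction ℂ)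
    with hM
  set H₁ : ArithmeticFunction ℂ := toAF f₁ * M with hH₁
  set H₂ : ArithmeticFunction ℂ := toAF f₂ * M with hH₂
  have hgG : ∀ n, dconv (dconv (dconv f₁ f₂) moebiusC) moebiusC n = (H₁ * H₂) n := by
    intro n
    rw [dconv_eq, toAF_dconv, toAF_dconv, toAF_moebiusC]
    rw [hH₁, hH₂, hM]
    congr 1
    ring
  have hs₁ : ∀ n, ¬ n ∣ m₁ → H₁ n = 0 := fun n hn => H_support hmul₁ hm₁0 h₁.2.1 hn
  have hs₂ : ∀ n, ¬ n ∣ m₂ → H₂ n = 0 := fun n hn => H_support hmul₂ hm₂0 h₂.2.1 hn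
  have hsG : ∀ n, ¬ n ∣ (m₁ * m₂) → (H₁ * H₂) n = 0 := mul_support_dvd hs₁ hs₂
  have hM0 : m₁ * m₂ ≠ 0 := Nat.mul_ne_zero hm₁0 hm₂0
  set L₁ : ArithmeticFunction ℂ := ⟨fun n => (Real.log n : ℂ) * H₁ n, by simp⟩ with hL₁
  set L₂ : ArithmeticFunction ℂ := ⟨fun n => (Real.log n : ℂ) * H₂ n, by simp⟩ with hL₂
  have hL₁app : ∀ n, L₁ n = (Real.log n : ℂ) * H₁ n := fun n => rfl
  have hL₂app : ∀ n, L₂ n = (Real.log n : ℂ) * H₂ n := fun n => rfl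
  have hLs₁ : ∀ n, ¬ n ∣ m₁ → L₁ n = 0 := fun n hn => by rw [hL₁app, hs₁ n hn, mul_zero]
  have hLs₂ : ∀ n, ¬ n ∣ m₂ → L₂ n = 0 := fun n hn => by rw [hL₂app, hs₂ n hn, mul_zero]
  have hlogid : ∀ n : ℕ, (H₁ * H₂) n * (Real.log n : ℂ) = (L₁ * H₂) n + (H₁ * L₂) n := by
    intro n
    rcases eq_or_ne n 0 with rfl | hn
    · simp
    rw [ArithmeticFunction.mul_apply, ArithmeticFunction.mul_apply,
      ArithmeticFunction.mul_apply, ← Finset.sum_add_distrib, Finset.sum_mul]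
    refine Finset.sum_congr rfl ?_
    rintro ⟨d, e⟩ hde
    obtain ⟨hmul', hne⟩ := Nat.mem_divisorsAntidiagonal.mp hde
    have hd0 : d ≠ 0 := by
      rintro rfl
      rw [zero_mul] at hmul'
      exact hn hmul'.symm
    have he0 : e ≠ 0 := by
      rintro rfl
      rw [mul_zero] at hmul'
      exact hn hmul'.symm
    have hlog : Real.log n = Real.log d + Real.log e := by
      rw [← hmul']
      push_cast
      exact Real.log_mul (by exact_mod_cast hd0) (by exact_mod_cast he0)
    rw [hL₁app, hL₂app, hlog]
    push_cast
    ring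
  have hz₁ : LSeries (fun n => H₁ n) 1 = 0 := by
    rw [lseries_eq_sum hm₁0 hs₁]
    exact sum_divisors_zero hmul₁ hm₁0 h₁
  have hz₂ : LSeries (fun n => H₂ n) 1 = 0 := by
    rw [lseries_eq_sum hm₂0 hs₂]
    exact sum_divisors_zero hmul₂ hm₂0 h₂
  have hS₁ : LSeriesSummable (fun n => H₁ n) 1 := lsummable_of_support hm₁0 hs₁
  have hS₂ : LSeriesSummable (fun n => H₂ n) 1 := lsummable_of_support hm₂0 hs₂
  have hSL₁ : LSeriesSummable (fun n => L₁ n) 1 := lsummable_of_support hm₁0 hLs₁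
  have hSL₂ : LSeriesSummable (fun n => L₂ n) 1 := lsummable_of_support hm₂0 hLs₂
  refine ⟨?_, ?_, ?_, ?_⟩
  · apply summable_of_ne_finset_zero (s := (m₁ * m₂).divisors)
    intro n hn
    rw [hgG, hsG n (fun hdvd => hn (Nat.mem_divisors.mpr ⟨hdvd, hM0⟩)), zero_div, norm_zero]
  · apply summable_of_ne_finset_zero (s := (m₁ * m₂).divisors)
    intro n hn
    rw [hgG, hsG n (fun hdvd => hn (Nat.mem_divisors.mpr ⟨hdvd, hM0⟩)), zero_mul, zero_div,
      norm_zero]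
  · rw [tsum_congr (fun n => by rw [hgG])]
    rw [tsum_div_eq_lseries (ArithmeticFunction.map_zero)]
    rw [LSeries_mul' hS₁ hS₂, hz₁, zero_mul]
  · have step1 : ∀ n : ℕ,
        dconv (dconv (dconv f₁ f₂) moebiusC) moebiusC n * (Real.log n : ℂ) / (n : ℂ)
          = (L₁ * H₂) n / (n : ℂ) + (H₁ * L₂) n / (n : ℂ) := by
      intro n
      rw [hgG, hlogid, add_div]
    rw [tsum_congr step1]
    have hsum1 : Summable (fun n : ℕ => (L₁ * H₂) n / (n : ℂ)) := by
      apply summable_of_ne_finset_zero (s := (m₁ * m₂).divisors)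
      intro n hn
      rw [mul_support_dvd hLs₁ hs₂ n (fun hdvd => hn (Nat.mem_divisors.mpr ⟨hdvd, hM0⟩)),
        zero_div]
    have hsum2 : Summable (fun n : ℕ => (H₁ * L₂) n / (n : ℂ)) := by
      apply summable_of_ne_finset_zero (s := (m₁ * m₂).divisors)
      intro n hn
      rw [mul_support_dvd hs₁ hLs₂ n (fun hdvd => hn (Nat.mem_divisors.mpr ⟨hdvd, hM0⟩)),
        zero_div]
    rw [Summable.tsum_add hsum1 hsum2,
      tsum_div_eq_lseries (ArithmeticFunction.map_zero),
      tsum_div_eq_lseries (ArithmeticFunction.map_zero),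
      LSeries_mul' hSL₁ hS₂, LSeries_mul' hS₁ hSL₂, hz₁, hz₂, mul_zero, zero_mul, add_zero]
end

section
/- Let q be a prime, and let f : ℕ → ℂ be the multiplicative function defined by f(q^k) = −(q−1) for all k ≥ 1 and f(p^k) = 1 for all primes p ≠ q and all k ≥ 1. Then for all real x > q², ∑_{n≤x} (f ∗ f)(n) = Δ(x) − 2q·Δ(x/q) + q²·Δ(x/q²). -/
/-- The error term in the Dirichlet divisor problem. -/
noncomputable def Δ (x : ℝ) : ℝ :=
  (∑ n ∈ Finset.Icc 1 ⌊x⌋₊, (n.divisors.card : ℝ)) - x * Real.log x -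
    (2 * Real.eulerMascheroniConstant - 1) * x

/-- The set of pairs `(a,b)` of positive naturals with `a*b ≤ M`. -/
def Tset (M : ℕ) : Finset (ℕ × ℕ) :=
  (Finset.Icc 1 M).biUnion (fun n => n.divisorsAntidiagonal)

lemma mem_Tset {M : ℕ} {p : ℕ × ℕ} :
    p ∈ Tset M ↔ p.1 ≠ 0 ∧ p.2 ≠ 0 ∧ p.1 * p.2 ≤ M := by
  simp only [Tset, Finset.mem_biUnion, Finset.mem_Icc, Nat.mem_divisorsAntidiagonal]
  constructor
  · rintro ⟨n, ⟨h1, h2⟩, heq, hn⟩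
    subst heq
    exact ⟨fun h => hn (by rw [h, zero_mul]), fun h => hn (by rw [h, mul_zero]), h2⟩
  · rintro ⟨h1, h2, h3⟩
    exact ⟨p.1 * p.2, ⟨Nat.one_le_iff_ne_zero.2 (mul_ne_zero h1 h2), h3⟩, rfl,
      mul_ne_zero h1 h2⟩

lemma Tset_disj (M : ℕ) : (↑(Finset.Icc 1 M) : Set ℕ).PairwiseDisjoint
    (fun n => n.divisorsAntidiagonal) := by
  intro a _ b _ hab
  rw [Function.onFun, Finset.disjoint_left]
  intro p hpa hpb
  exact hab ((Nat.mem_divisorsAntidiagonal.1 hpa).1.symm.trans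
    (Nat.mem_divisorsAntidiagonal.1 hpb).1)

lemma sum_Tset (M : ℕ) (g : ℕ × ℕ → ℂ) :
    ∑ n ∈ Finset.Icc 1 M, ∑ p ∈ n.divisorsAntidiagonal, g p = ∑ p ∈ Tset M, g p :=
  (Finset.sum_biUnion (Tset_disj M)).symm

lemma card_Tset (M : ℕ) :
    ((Tset M).card : ℝ) = ∑ n ∈ Finset.Icc 1 M, (n.divisors.card : ℝ) := by
  rw [Tset, Finset.card_biUnion (Tset_disj M)]
  push_cast
  refine Finset.sum_congr rfl fun n _ => ?_
  rw [← Nat.map_div_right_divisors, Finset.card_map]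

lemma card_filter_fst (q M : ℕ) (hq : 0 < q) :
    ((Tset M).filter (fun p => q ∣ p.1)).card = (Tset (M / q)).card := by
  apply Finset.card_nbij' (fun p => (p.1 / q, p.2)) (fun p => (q * p.1, p.2))
  · intro p hp
    simp only [Finset.mem_coe] at hp ⊢
    rw [Finset.mem_filter, mem_Tset] at hp
    obtain ⟨⟨h1, h2, h3⟩, a, ha⟩ := hp
    rw [ha] at h1 h3 ⊢
    rw [mem_Tset]
    rw [Nat.mul_div_cancel_left _ hq]
    refine ⟨by rintro rfl; simp at h1, h2, ?_⟩
    rw [Nat.le_div_iff_mul_le hq]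
    nlinarith
  · intro p hp
    simp only [Finset.mem_coe] at hp ⊢
    rw [mem_Tset] at hp
    obtain ⟨h1, h2, h3⟩ := hp
    rw [Finset.mem_filter, mem_Tset]
    rw [Nat.le_div_iff_mul_le hq] at h3
    exact ⟨⟨by positivity, h2, by nlinarith⟩, Dvd.intro _ rfl⟩
  · intro p hp
    rw [Finset.mem_coe, Finset.mem_filter] at hp
    obtain ⟨_, hd⟩ := hp
    simp [Nat.mul_div_cancel' hd]
  · intro p hp
    simp [Nat.mul_div_cancel_left _ hq]

lemma card_filter_snd (q M : ℕ) (hq : 0 < q) :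
    ((Tset M).filter (fun p => q ∣ p.2)).card = (Tset (M / q)).card := by
  apply Finset.card_nbij' (fun p => (p.1, p.2 / q)) (fun p => (p.1, q * p.2))
  · intro p hp
    simp only [Finset.mem_coe] at hp ⊢
    rw [Finset.mem_filter, mem_Tset] at hp
    obtain ⟨⟨h1, h2, h3⟩, a, ha⟩ := hp
    rw [ha] at h2 h3 ⊢
    rw [mem_Tset]
    rw [Nat.mul_div_cancel_left _ hq]
    refine ⟨h1, by rintro rfl; simp at h2, ?_⟩
    rw [Nat.le_div_iff_mul_le hq]
    nlinarith
  · intro p hp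
    simp only [Finset.mem_coe] at hp ⊢
    rw [mem_Tset] at hp
    obtain ⟨h1, h2, h3⟩ := hp
    rw [Finset.mem_filter, mem_Tset]
    rw [Nat.le_div_iff_mul_le hq] at h3
    exact ⟨⟨h1, by positivity, by nlinarith⟩, Dvd.intro _ rfl⟩
  · intro p hp
    rw [Finset.mem_coe, Finset.mem_filter] at hp
    obtain ⟨_, hd⟩ := hp
    simp [Nat.mul_div_cancel' hd]
  · intro p hp
    simp [Nat.mul_div_cancel_left _ hq]

lemma card_filter_both (q M : ℕ) (hq : 0 < q) :
    ((Tset M).filter (fun p => q ∣ p.1 ∧ q ∣ p.2)).card = (Tset (M / q / q)).card := by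
  apply Finset.card_nbij' (fun p => (p.1 / q, p.2 / q)) (fun p => (q * p.1, q * p.2))
  · intro p hp
    simp only [Finset.mem_coe] at hp ⊢
    rw [Finset.mem_filter, mem_Tset] at hp
    obtain ⟨⟨h1, h2, h3⟩, ⟨a, ha⟩, ⟨b, hb⟩⟩ := hp
    rw [ha] at h1 h3 ⊢
    rw [hb] at h2 h3 ⊢
    rw [mem_Tset, Nat.mul_div_cancel_left _ hq, Nat.mul_div_cancel_left _ hq]
    refine ⟨by rintro rfl; simp at h1, by rintro rfl; simp at h2, ?_⟩
    rw [Nat.le_div_iff_mul_le hq, Nat.le_div_iff_mul_le hq]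
    nlinarith
  · intro p hp
    simp only [Finset.mem_coe] at hp ⊢
    rw [mem_Tset] at hp
    obtain ⟨h1, h2, h3⟩ := hp
    rw [Finset.mem_filter, mem_Tset]
    rw [Nat.le_div_iff_mul_le hq, Nat.le_div_iff_mul_le hq] at h3
    exact ⟨⟨by positivity, by positivity, by nlinarith⟩, Dvd.intro _ rfl, Dvd.intro _ rfl⟩
  · intro p hp
    rw [Finset.mem_coe, Finset.mem_filter] at hp
    obtain ⟨_, hd1, hd2⟩ := hp
    simp [Nat.mul_div_cancel' hd1, Nat.mul_div_cancel' hd2]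
  · intro p hp
    simp [Nat.mul_div_cancel_left _ hq]

/-- Pointwise formula for `f`. -/
lemma f_eval (q : ℕ) (hq : q.Prime) (f : ℕ → ℂ)
    (hmul : IsMultiplicativeFn f)
    (hfq : ∀ k : ℕ, 1 ≤ k → f (q ^ k) = -((q : ℂ) - 1))
    (hfp : ∀ p : ℕ, p.Prime → p ≠ q → ∀ k : ℕ, 1 ≤ k → f (p ^ k) = 1) :
    ∀ n : ℕ, n ≠ 0 → f n = if q ∣ n then 1 - (q : ℂ) else 1 := by
  intro n
  induction n using Nat.recOnPrimePow with
  | zero => intro h; exact absurd rfl h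
  | one =>
    intro _
    rw [if_neg (by simpa using hq.one_lt.ne'), hmul.1]
  | prime_pow_mul a p k hp hpa hk ih =>
    intro _
    have ha : a ≠ 0 := by
      rintro rfl
      exact hpa (dvd_zero p)
    have hcop : Nat.Coprime (p ^ k) a :=
      Nat.Coprime.pow_left k ((Nat.Prime.coprime_iff_not_dvd hp).2 hpa)
    rw [hmul.2 _ _ hcop]
    by_cases hpq : p = q
    · subst hpq
      have hdvd : p ∣ p ^ k * a := dvd_mul_of_dvd_left (dvd_pow_self p hk.ne') a
      rw [if_pos hdvd, hfq k hk, ih ha, if_neg hpa]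
      ring
    · rw [hfp p hp hpq k hk, one_mul, ih ha]
      have hiff : q ∣ p ^ k * a ↔ q ∣ a := by
        constructor
        · intro h
          rcases (Nat.Prime.dvd_mul hq).1 h with h' | h'
          · exact absurd ((Nat.prime_dvd_prime_iff_eq hq hp).1
              (hq.dvd_of_dvd_pow h')).symm hpq
          · exact h'
        · intro h; exact h.mul_left _
      by_cases hd : q ∣ a
      · rw [if_pos (hiff.2 hd), if_pos hd]
      · rw [if_neg (fun h => hd (hiff.1 h)), if_neg hd]

theorem stmt_12 (q : ℕ) (hq : q.Prime) (f : ℕ → ℂ)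
    (hmul : IsMultiplicativeFn f)
    (hfq : ∀ k : ℕ, 1 ≤ k → f (q ^ k) = -((q : ℂ) - 1))
    (hfp : ∀ p : ℕ, p.Prime → p ≠ q → ∀ k : ℕ, 1 ≤ k → f (p ^ k) = 1) :
    ∀ x : ℝ, ((q : ℝ) ^ 2 < x) →
      ∑ n ∈ Finset.Icc 1 ⌊x⌋₊, dconv f f n =
        (Δ x : ℂ) - 2 * (q : ℂ) * (Δ (x / q) : ℂ) +
          (q : ℂ) ^ 2 * (Δ (x / (q : ℝ) ^ 2) : ℂ) := by
  intro x hx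
  have hq0 : 0 < q := hq.pos
  have hqR : (0 : ℝ) < q := by exact_mod_cast hq0
  have hx0 : (0 : ℝ) < x := lt_trans (by positivity) hx
  set N := ⌊x⌋₊ with hN
  -- Step 1: rewrite LHS as a sum over pairs
  have hL : ∑ n ∈ Finset.Icc 1 N, dconv f f n = ∑ p ∈ Tset N, f p.1 * f p.2 := by
    rw [← sum_Tset]
    refine Finset.sum_congr rfl fun n _ => ?_
    simp only [dconv]
    exact (Nat.sum_divisorsAntidiagonal (fun a b => f a * f b)).symm
  -- Step 2: pointwise evaluation
  have hfe := f_eval q hq f hmul hfq hfp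
  have hL2 : ∑ p ∈ Tset N, f p.1 * f p.2 =
      ∑ p ∈ Tset N, ((1 : ℂ) + (if q ∣ p.1 then -(q : ℂ) else 0) +
        (if q ∣ p.2 then -(q : ℂ) else 0) +
        (if q ∣ p.1 ∧ q ∣ p.2 then (q : ℂ) ^ 2 else 0)) := by
    refine Finset.sum_congr rfl fun p hp => ?_
    rw [mem_Tset] at hp
    rw [hfe p.1 hp.1, hfe p.2 hp.2.1]
    by_cases h1 : q ∣ p.1 <;> by_cases h2 : q ∣ p.2 <;> simp [h1, h2] <;> ring
  -- Step 3: split the sum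
  have e1 : ∑ p ∈ Tset N, (if q ∣ p.1 then -(q : ℂ) else 0) =
      ((Tset (N / q)).card : ℂ) * (-(q : ℂ)) := by
    rw [← Finset.sum_filter, Finset.sum_const, card_filter_fst q N hq0, nsmul_eq_mul]
  have e2 : ∑ p ∈ Tset N, (if q ∣ p.2 then -(q : ℂ) else 0) =
      ((Tset (N / q)).card : ℂ) * (-(q : ℂ)) := by
    rw [← Finset.sum_filter, Finset.sum_const, card_filter_snd q N hq0, nsmul_eq_mul]
  have e3 : ∑ p ∈ Tset N, (if q ∣ p.1 ∧ q ∣ p.2 then (q : ℂ) ^ 2 else 0) =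
      ((Tset (N / q / q)).card : ℂ) * (q : ℂ) ^ 2 := by
    rw [← Finset.sum_filter, Finset.sum_const, card_filter_both q N hq0, nsmul_eq_mul]
  -- Step 4: floors
  have hfloor1 : ⌊x / (q : ℝ)⌋₊ = N / q := Nat.floor_div_natCast x q
  have hfloor2 : ⌊x / (q : ℝ) ^ 2⌋₊ = N / q / q := by
    have h : ((q : ℝ)) ^ 2 = ((q ^ 2 : ℕ) : ℝ) := by push_cast; ring
    rw [h, Nat.floor_div_natCast, pow_two, ← Nat.div_div_eq_div_mul]
  -- Step 5: real identity (main terms cancel)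
  have hlog : Δ x - 2 * (q : ℝ) * Δ (x / q) + (q : ℝ) ^ 2 * Δ (x / (q : ℝ) ^ 2) =
      ((Tset N).card : ℝ) - 2 * (q : ℝ) * ((Tset (N / q)).card : ℝ) +
        (q : ℝ) ^ 2 * ((Tset (N / q / q)).card : ℝ) := by
    unfold Δ
    rw [hfloor1, hfloor2, ← hN, ← card_Tset, ← card_Tset, ← card_Tset]
    have l1 : Real.log (x / q) = Real.log x - Real.log q :=
      Real.log_div hx0.ne' hqR.ne'
    have l2 : Real.log (x / (q : ℝ) ^ 2) = Real.log x - 2 * Real.log q := by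
      rw [Real.log_div hx0.ne' (by positivity), Real.log_pow]
      push_cast; ring
    rw [l1, l2]
    field_simp
    ring
  -- Step 6: conclude
  have hR : (Δ x : ℂ) - 2 * (q : ℂ) * (Δ (x / q) : ℂ) +
      (q : ℂ) ^ 2 * (Δ (x / (q : ℝ) ^ 2) : ℂ) =
      ((Tset N).card : ℂ) - 2 * (q : ℂ) * ((Tset (N / q)).card : ℂ) +
        (q : ℂ) ^ 2 * ((Tset (N / q / q)).card : ℂ) := by
    have h := congrArg (fun r : ℝ => (r : ℂ)) hlog
    push_cast at h ⊢
    linear_combination h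
  rw [hL, hL2, hR]
  simp only [Finset.sum_add_distrib, e1, e2, e3, Finset.sum_const, nsmul_eq_mul, mul_one]
  ring
end

section
/- Let f : ℕ → ℂ be multiplicative and let m ≥ 1 be an integer such that: for each prime power p^a exactly dividing m, f(p^k) = f(p^a) for all k ≥ a; and for each prime p with gcd(p,m) = 1, f(p^k) = 1 for all k ≥ 1. Then ∑_{n=1}^m f(n) = φ(m) · ∏_{p|m} ∑_{k=0}^∞ f(p^k)/p^k, where φ is Euler's totient function and the product is over primes p dividing m. -/
lemma aux_fgcd (f : ℕ → ℂ) (m : ℕ) (hm : 1 ≤ m)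
    (h1 : f 1 = 1) (h2 : ∀ x y : ℕ, Nat.Coprime x y → f (x * y) = f x * f y)
    (hii : ∀ p a : ℕ, p.Prime → p ^ a ∣ m → ¬ p ^ (a + 1) ∣ m →
      ∀ k : ℕ, a ≤ k → f (p ^ k) = f (p ^ a))
    (hiii : ∀ p : ℕ, p.Prime → Nat.Coprime p m → ∀ k : ℕ, 1 ≤ k → f (p ^ k) = 1)
    (n : ℕ) (hn : 1 ≤ n) : f n = f (Nat.gcd n m) := by
  have hm0 : m ≠ 0 := by omega
  have hn0 : n ≠ 0 := by omega
  have hg0 : Nat.gcd n m ≠ 0 := Nat.gcd_ne_zero_right hm0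
  rw [Nat.multiplicative_factorization f h2 h1 hn0,
      Nat.multiplicative_factorization f h2 h1 hg0]
  rw [Finsupp.prod, Finsupp.prod]
  have hfac : ∀ p : ℕ, (Nat.gcd n m).factorization p =
      min (n.factorization p) (m.factorization p) := by
    intro p
    rw [Nat.factorization_gcd hn0 hm0]
    rfl
  have hsub : (Nat.gcd n m).factorization.support ⊆ n.factorization.support := by
    intro p hp
    simp only [Finsupp.mem_support_iff, hfac] at hp ⊢
    omega
  calc ∏ p ∈ n.factorization.support, f (p ^ n.factorization p)
      = ∏ p ∈ n.factorization.support,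
          f (p ^ min (n.factorization p) (m.factorization p)) := by
        apply Finset.prod_congr rfl
        intro p hp
        have hpprime : p.Prime := Nat.prime_of_mem_primeFactors (by
          rwa [Nat.support_factorization] at hp)
        have hvn : 1 ≤ n.factorization p := by
          simp only [Finsupp.mem_support_iff] at hp; omega
        by_cases hpm : p ∣ m
        · set a := m.factorization p with ha
          have hdvd : p ^ a ∣ m := Nat.ordProj_dvd m p
          have hndvd : ¬ p ^ (a + 1) ∣ m := Nat.pow_succ_factorization_not_dvd hm0 hpprime
          rcases le_or_gt a (n.factorization p) with hle | hlt
          · rw [min_eq_right hle, hii p a hpprime hdvd hndvd _ hle]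
          · rw [min_eq_left hlt.le]
        · have ha : m.factorization p = 0 := Nat.factorization_eq_zero_of_not_dvd hpm
          rw [ha, min_eq_right (Nat.zero_le _), pow_zero, h1]
          exact hiii p hpprime (hpprime.coprime_iff_not_dvd.mpr hpm) _ hvn
    _ = ∏ p ∈ (Nat.gcd n m).factorization.support,
          f (p ^ min (n.factorization p) (m.factorization p)) := by
        refine (Finset.prod_subset hsub ?_).symm
        intro p hp hnp
        simp only [Finsupp.mem_support_iff, hfac, not_not] at hnp
        rw [hnp, pow_zero, h1]
    _ = ∏ p ∈ (Nat.gcd n m).factorization.support, f (p ^ (Nat.gcd n m).factorization p) := by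
        apply Finset.prod_congr rfl
        intro p _
        rw [hfac]

lemma aux_card (m d : ℕ) (hm0 : m ≠ 0) (hd : d ∣ m) :
    ((Finset.Icc 1 m).filter (fun n => Nat.gcd n m = d)).card = (m / d).totient := by
  have hd0 : d ≠ 0 := by rintro rfl; exact hm0 (Nat.zero_dvd.mp hd)
  rw [← Nat.filter_coprime_Ico_eq_totient (m / d) 1]
  apply Finset.card_nbij' (fun n => n / d) (fun t => d * t)
  · intro n hn
    simp only [Finset.mem_coe, Finset.mem_filter, Finset.mem_Icc, Finset.mem_Ico] at hn ⊢
    obtain ⟨⟨h1, h2⟩, hg⟩ := hn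
    have hdn : d ∣ n := hg ▸ Nat.gcd_dvd_left n m
    obtain ⟨t, rfl⟩ := hdn
    rw [Nat.mul_div_cancel_left t (Nat.pos_of_ne_zero hd0)]
    have ht0 : t ≠ 0 := by rintro rfl; simp at h1
    refine ⟨⟨by omega, ?_⟩, ?_⟩
    · have : t ≤ m / d := Nat.le_div_iff_mul_le (Nat.pos_of_ne_zero hd0) |>.mpr (by
        rw [mul_comm]; exact h2)
      omega
    · obtain ⟨u, hu⟩ := hd
      rw [hu, Nat.mul_div_cancel_left u (Nat.pos_of_ne_zero hd0)]
      have := hg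
      rw [hu, Nat.gcd_mul_left] at this
      have : Nat.gcd t u = 1 := by
        have hdd : d * Nat.gcd t u = d * 1 := by rw [mul_one]; exact this
        exact Nat.eq_of_mul_eq_mul_left (Nat.pos_of_ne_zero hd0) hdd
      exact Nat.Coprime.symm this
  · intro t ht
    simp only [Finset.mem_coe, Finset.mem_filter, Finset.mem_Icc, Finset.mem_Ico] at ht ⊢
    obtain ⟨⟨h1, h2⟩, hc⟩ := ht
    have h2' : t ≤ m / d := by omega
    obtain ⟨u, hu⟩ := hd
    have hu' : m / d = u := by rw [hu, Nat.mul_div_cancel_left u (Nat.pos_of_ne_zero hd0)]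
    constructor
    · constructor
      · have : 1 ≤ t := h1
        calc 1 ≤ t := h1
          _ ≤ d * t := Nat.le_mul_of_pos_left t (Nat.pos_of_ne_zero hd0)
      · calc d * t ≤ d * (m / d) := Nat.mul_le_mul_left d h2'
          _ = m := Nat.mul_div_cancel' ⟨u, hu⟩
    · rw [hu, Nat.gcd_mul_left]
      have : Nat.gcd t u = 1 := by rw [← hu']; exact hc.symm
      rw [this, mul_one]
  · intro n hn
    simp only [Finset.mem_coe, Finset.mem_filter, Finset.mem_Icc] at hn
    have hdn : d ∣ n := hn.2 ▸ Nat.gcd_dvd_left n m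
    exact Nat.mul_div_cancel' hdn
  · intro t _
    exact Nat.mul_div_cancel_left t (Nat.pos_of_ne_zero hd0)

lemma aux_sum (f : ℕ → ℂ) (m : ℕ) (hm0 : m ≠ 0) :
    ∑ n ∈ Finset.Icc 1 m, f (Nat.gcd n m) =
      ∑ d ∈ m.divisors, f d * ((m / d).totient : ℂ) := by
  rw [← Finset.sum_fiberwise_of_maps_to (g := fun n => Nat.gcd n m)
    (t := m.divisors) (fun n _ => Nat.mem_divisors.mpr ⟨Nat.gcd_dvd_right n m, hm0⟩)]
  apply Finset.sum_congr rfl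
  intro d hd
  have : ∀ n ∈ (Finset.Icc 1 m).filter (fun n => Nat.gcd n m = d),
      f (Nat.gcd n m) = f d := by
    intro n hn
    simp only [Finset.mem_filter] at hn
    rw [hn.2]
  rw [Finset.sum_congr rfl this, Finset.sum_const, nsmul_eq_mul,
    aux_card m d hm0 (Nat.mem_divisors.mp hd).1, mul_comm]

lemma aux_prime (f : ℕ → ℂ) (p a : ℕ) (hp : p.Prime) (ha : 1 ≤ a)
    (hC : ∀ k : ℕ, a ≤ k → f (p ^ k) = f (p ^ a)) :
    ((p ^ a : ℕ).totient : ℂ) * ∑' k : ℕ, f (p ^ k) / (p : ℂ) ^ k =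
      ∑ k ∈ Finset.range (a + 1), f (p ^ k) * (((p ^ (a - k) : ℕ)).totient : ℂ) := by
  have hp2 : (2 : ℕ) ≤ p := hp.two_le
  have hpC : (p : ℂ) ≠ 0 := by exact_mod_cast hp.ne_zero
  set c : ℂ := (p : ℂ)⁻¹ with hc
  have hcn : ‖c‖ < 1 := by
    rw [hc, norm_inv]
    rw [inv_lt_one_iff₀]
    right
    simp only [Complex.norm_natCast]
    exact_mod_cast by omega
  have hgeo : Summable (fun k : ℕ => c ^ k) := summable_geometric_of_norm_lt_one hcn
  have hdiv : ∀ k : ℕ, f (p ^ k) / (p : ℂ) ^ k = f (p ^ k) * c ^ k := by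
    intro k; rw [hc, div_eq_mul_inv, inv_pow]
  set g : ℕ → ℂ := fun k => f (p ^ k) * c ^ k with hg
  have hshift : ∀ k : ℕ, g (k + a) = (f (p ^ a) * c ^ a) * c ^ k := by
    intro k
    simp only [hg]
    rw [hC (k + a) (by omega), pow_add, mul_comm (c ^ k), mul_assoc]
  have hsumg : Summable g := by
    rw [← summable_nat_add_iff a]
    apply Summable.congr (hgeo.mul_left (f (p ^ a) * c ^ a))
    intro k
    rw [hshift]
  have htsum : ∑' k : ℕ, g k =
      (∑ k ∈ Finset.range a, g k) + (f (p ^ a) * c ^ a) * (1 - c)⁻¹ := by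
    rw [← Summable.sum_add_tsum_nat_add a hsumg]
    congr 1
    rw [tsum_congr hshift, tsum_mul_left, tsum_geometric_of_norm_lt_one hcn]
  have hts : ∑' k : ℕ, f (p ^ k) / (p : ℂ) ^ k = ∑' k : ℕ, g k := tsum_congr hdiv
  rw [hts, htsum]
  -- now pure algebra
  have htot : ∀ j : ℕ, 1 ≤ j → (((p ^ j : ℕ)).totient : ℂ) =
      (p : ℂ) ^ (j - 1) * ((p : ℂ) - 1) := by
    intro j hj
    rw [Nat.totient_prime_pow hp (by omega)]
    push_cast [Nat.cast_sub hp.one_le]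
    ring
  rw [Finset.sum_range_succ]
  have hlast : f (p ^ a) * (((p ^ (a - a) : ℕ)).totient : ℂ) = f (p ^ a) := by
    simp
  rw [hlast]
  rw [mul_add, Finset.mul_sum]
  congr 1
  · apply Finset.sum_congr rfl
    intro k hk
    have hk' : k < a := Finset.mem_range.mp hk
    rw [htot a ha, htot (a - k) (by omega)]
    simp only [hg]
    have hpow : (p : ℂ) ^ (a - 1) = (p : ℂ) ^ (a - k - 1) * (p : ℂ) ^ k := by
      rw [← pow_add]
      congr 1
      omega
    rw [hpow, hc]
    field_simp
    have hk1 : (p:ℂ)^k * (p:ℂ)⁻¹^k = 1 := by rw [← mul_pow, mul_inv_cancel₀ hpC, one_pow]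
    linear_combination (p * f (p^k) - f (p^k)) * hk1
  · -- φ(p^a) * (f(p^a) c^a (1-c)⁻¹) = f(p^a)
    have h1c : (1 : ℂ) - c ≠ 0 := by
      intro h
      have : c = 1 := by linear_combination -h
      rw [this] at hcn
      simp at hcn
    have hpa : (p : ℂ) ^ a = (p : ℂ) ^ (a - 1) * p := by
      rw [← pow_succ]
      congr 1
      omega
    have key : ((p : ℂ)) ^ (a - 1) * ((p : ℂ) - 1) = (p : ℂ) ^ a * (1 - c) := by
      rw [hpa, hc]
      field_simp
    have hpan : (p : ℂ) ^ a ≠ 0 := pow_ne_zero _ hpC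
    rw [htot a ha, key, hc, inv_pow]
    field_simp
    have hp1 : (p : ℂ) - 1 ≠ 0 := sub_ne_zero.mpr (by
      intro h
      have : p = 1 := by exact_mod_cast h
      omega)
    rw [mul_div_right_comm, div_self hp1]
    ring

open ArithmeticFunction in
theorem stmt_13' (f : ℕ → ℂ) (m : ℕ) (hm : 1 ≤ m)
    (h1 : f 1 = 1) (h2 : ∀ x y : ℕ, Nat.Coprime x y → f (x * y) = f x * f y)
    (hii : ∀ p a : ℕ, p.Prime → p ^ a ∣ m → ¬ p ^ (a + 1) ∣ m →
      ∀ k : ℕ, a ≤ k → f (p ^ k) = f (p ^ a))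
    (hiii : ∀ p : ℕ, p.Prime → Nat.Coprime p m → ∀ k : ℕ, 1 ≤ k → f (p ^ k) = 1) :
    ∑ n ∈ Finset.Icc 1 m, f n =
      (m.totient : ℂ) * ∏ p ∈ m.primeFactors, ∑' k : ℕ, f (p ^ k) / (p : ℂ) ^ k := by
  have hm0 : m ≠ 0 := by omega
  -- the two arithmetic functions
  set F : ArithmeticFunction ℂ := ⟨fun n => if n = 0 then 0 else f n, if_pos rfl⟩ with hFdef
  have hFap : ∀ n : ℕ, n ≠ 0 → F n = f n := fun n hn => if_neg hn
  have hF : F.IsMultiplicative := by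
    constructor
    · rw [hFap 1 one_ne_zero, h1]
    · intro x y hxy
      rcases eq_or_ne x 0 with rfl | hx
      · have : y = 1 := Nat.coprime_zero_left y |>.mp hxy
        subst this
        simp [hFdef]
      rcases eq_or_ne y 0 with rfl | hy
      · have : x = 1 := Nat.coprime_zero_right x |>.mp hxy
        subst this
        simp [hFdef]
      rw [hFap _ (mul_ne_zero hx hy), hFap _ hx, hFap _ hy, h2 x y hxy]
  set Phi : ArithmeticFunction ℂ := ⟨fun n => (n.totient : ℂ), by simp⟩ with hPhidef
  have hPhiap : ∀ n : ℕ, Phi n = (n.totient : ℂ) := fun n => rfl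
  have hPhi : Phi.IsMultiplicative := by
    constructor
    · rw [hPhiap, Nat.totient_one, Nat.cast_one]
    · intro x y hxy
      rw [hPhiap, hPhiap, hPhiap, Nat.totient_mul hxy, Nat.cast_mul]
  have hG : (F * Phi).IsMultiplicative := hF.mul hPhi
  -- step 1 : LHS = divisor sum
  have step1 : ∑ n ∈ Finset.Icc 1 m, f n =
      ∑ d ∈ m.divisors, f d * ((m / d).totient : ℂ) := by
    rw [Finset.sum_congr rfl (fun n hn => aux_fgcd f m hm h1 h2 hii hiii n
      (Finset.mem_Icc.mp hn).1)]
    exact aux_sum f m hm0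
  -- step 2 : divisor sum = (F * Phi) m
  have hGap : ∀ x : ℕ, x ≠ 0 →
      (F * Phi) x = ∑ d ∈ x.divisors, f d * ((x / d).totient : ℂ) := by
    intro x hx
    rw [ArithmeticFunction.mul_apply, Nat.sum_divisorsAntidiagonal (fun a b => F a * Phi b)]
    apply Finset.sum_congr rfl
    intro d hd
    rw [hFap d (Nat.pos_of_mem_divisors hd).ne', hPhiap]
  -- step 3 : factor (F * Phi) m over primes
  have step3 : (F * Phi) m = ∏ p ∈ m.primeFactors, (F * Phi) (p ^ m.factorization p) := by
    rw [hG.multiplicative_factorization (F * Phi) hm0, Nat.prod_factorization_eq_prod_primeFactors]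
  -- per prime value
  have perprime : ∀ p ∈ m.primeFactors, (F * Phi) (p ^ m.factorization p) =
      (((p ^ m.factorization p : ℕ)).totient : ℂ) * ∑' k : ℕ, f (p ^ k) / (p : ℂ) ^ k := by
    intro p hp
    have hpp : p.Prime := Nat.prime_of_mem_primeFactors hp
    set a := m.factorization p with ha
    have ha1 : 1 ≤ a := (Nat.Prime.factorization_pos_of_dvd hpp hm0
      (Nat.dvd_of_mem_primeFactors hp))
    have hpa0 : (p ^ a : ℕ) ≠ 0 := pow_ne_zero _ hpp.ne_zero
    rw [hGap _ hpa0, Nat.sum_divisors_prime_pow hpp]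
    have hquot : ∀ k ∈ Finset.range (a + 1),
        f (p ^ k) * (((p ^ a / p ^ k : ℕ)).totient : ℂ) =
        f (p ^ k) * (((p ^ (a - k) : ℕ)).totient : ℂ) := by
      intro k hk
      have hk' : k < a + 1 := Finset.mem_range.mp hk
      rw [Nat.pow_div (by omega : k ≤ a) hpp.pos]
    rw [Finset.sum_congr rfl hquot]
    refine (aux_prime f p a hpp ha1 ?_).symm
    exact hii p a hpp (Nat.ordProj_dvd m p) (Nat.pow_succ_factorization_not_dvd hm0 hpp)
  -- totient factorization
  have htotfac : (m.totient : ℂ) =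
      ∏ p ∈ m.primeFactors, (((p ^ m.factorization p : ℕ)).totient : ℂ) := by
    rw [Nat.multiplicative_factorization (fun x => (x.totient : ℂ))
      (fun x y hxy => by push_cast [Nat.totient_mul hxy]; ring)
      (by simp) hm0, Nat.prod_factorization_eq_prod_primeFactors]
  calc ∑ n ∈ Finset.Icc 1 m, f n = (F * Phi) m := by rw [step1, hGap m hm0]
    _ = ∏ p ∈ m.primeFactors, (F * Phi) (p ^ m.factorization p) := step3
    _ = ∏ p ∈ m.primeFactors, ((((p ^ m.factorization p : ℕ)).totient : ℂ) *
          ∑' k : ℕ, f (p ^ k) / (p : ℂ) ^ k) := Finset.prod_congr rfl perprime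
    _ = (m.totient : ℂ) * ∏ p ∈ m.primeFactors, ∑' k : ℕ, f (p ^ k) / (p : ℂ) ^ k := by
        rw [Finset.prod_mul_distrib, htotfac]

theorem stmt_13 (f : ℕ → ℂ) (m : ℕ) (hm : 1 ≤ m)
    (hmul : IsMultiplicativeFn f)
    (hii : ∀ p a : ℕ, p.Prime → p ^ a ∣ m → ¬ p ^ (a + 1) ∣ m →
      ∀ k : ℕ, a ≤ k → f (p ^ k) = f (p ^ a))
    (hiii : ∀ p : ℕ, p.Prime → Nat.Coprime p m → ∀ k : ℕ, 1 ≤ k → f (p ^ k) = 1) :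
    ∑ n ∈ Finset.Icc 1 m, f n =
      (m.totient : ℂ) * ∏ p ∈ m.primeFactors, ∑' k : ℕ, f (p ^ k) / (p : ℂ) ^ k := by
  exact stmt_13' f m hm hmul.1 hmul.2 hii hiii
end

section
/- Let f : ℕ → ℂ be multiplicative and let m ≥ 1 be an integer such that: for each prime power p^a exactly dividing m, f(p^k) = f(p^a) for all k ≥ a; and for each prime p with gcd(p,m) = 1, f(p^k) = 1 for all k ≥ 1. Then f(n) = f(gcd(n,m)) for every n ≥ 1; in particular, f has period m. -/
theorem stmt_14 (f : ℕ → ℂ) (m : ℕ) (hm : 1 ≤ m)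
    (hmul : IsMultiplicativeFn f)
    (hii : ∀ p a : ℕ, p.Prime → p ^ a ∣ m → ¬ p ^ (a + 1) ∣ m →
      ∀ k : ℕ, a ≤ k → f (p ^ k) = f (p ^ a))
    (hiii : ∀ p : ℕ, p.Prime → Nat.Coprime p m → ∀ k : ℕ, 1 ≤ k → f (p ^ k) = 1) :
    (∀ n : ℕ, 1 ≤ n → f n = f (Nat.gcd n m)) ∧
    (∀ n : ℕ, 1 ≤ n → f (n + m) = f n) := by
  have hm0 : m ≠ 0 := by omega
  have key : ∀ n : ℕ, f n = f (Nat.gcd n m) ∨ n = 0 := by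
    intro n
    induction n using Nat.recOnPosPrimePosCoprime with
    | zero => right; rfl
    | one => left; simp [Nat.gcd_one_left]
    | prime_pow p k hp hk =>
        left
        have hpp : p.Prime := hp
        set v := m.factorization p with hv
        have hgcd : Nat.gcd (p ^ k) m = p ^ min k v := by
          obtain ⟨j, hj, hje⟩ := (Nat.dvd_prime_pow hpp).mp (Nat.gcd_dvd_left (p ^ k) m)
          have hjm : p ^ j ∣ m := hje ▸ Nat.gcd_dvd_right (p ^ k) m
          have hjv : j ≤ v := (Nat.Prime.pow_dvd_iff_le_factorization hpp hm0).mp hjm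
          have hmin : p ^ min k v ∣ Nat.gcd (p ^ k) m :=
            Nat.dvd_gcd (pow_dvd_pow p (min_le_left _ _))
              ((Nat.Prime.pow_dvd_iff_le_factorization hpp hm0).mpr (min_le_right _ _))
          have : min k v ≤ j := by
            have := hje ▸ hmin
            exact (Nat.pow_dvd_pow_iff_le_right hpp.one_lt).mp this
          have : j = min k v := le_antisymm (le_min hj hjv) this
          rw [hje, this]
        rw [hgcd]
        rcases Nat.eq_zero_or_pos v with hv0 | hv1
        · have hpm : ¬ p ∣ m := by
            have := (Nat.factorization_eq_zero_iff m p).mp hv0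
            rcases this with h | h | h
            · exact absurd hpp h
            · exact h
            · exact absurd h hm0
          have hcop : Nat.Coprime p m := (Nat.Prime.coprime_iff_not_dvd hpp).mpr hpm
          rw [hiii p hpp hcop k hk, hv0]
          simp [hmul.1]
        · rcases le_or_gt v k with hvk | hkv
          · rw [min_eq_right hvk]
            exact hii p v hpp (Nat.ordProj_dvd m p)
              (Nat.pow_succ_factorization_not_dvd hm0 hpp) k hvk
          · rw [min_eq_left hkv.le]
    | coprime a b ha hb hab iha ihb =>
        left
        have ha' : f a = f (Nat.gcd a m) := iha.resolve_right (by omega)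
        have hb' : f b = f (Nat.gcd b m) := ihb.resolve_right (by omega)
        have hcop : Nat.Coprime (Nat.gcd a m) (Nat.gcd b m) :=
          Nat.Coprime.coprime_dvd_left (Nat.gcd_dvd_left a m)
            (Nat.Coprime.coprime_dvd_right (Nat.gcd_dvd_left b m) hab)
        have hg : Nat.gcd (a * b) m = Nat.gcd a m * Nat.gcd b m := by
          rw [Nat.gcd_comm (a*b) m, Nat.Coprime.gcd_mul m hab, Nat.gcd_comm m a, Nat.gcd_comm m b]
        rw [hmul.2 a b hab, ha', hb', hg, hmul.2 _ _ hcop]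
  have first : ∀ n : ℕ, 1 ≤ n → f n = f (Nat.gcd n m) := by
    intro n hn
    exact (key n).resolve_right (by omega)
  refine ⟨first, fun n hn => ?_⟩
  rw [first (n + m) (by omega), first n hn, Nat.gcd_add_self_left]
end

section
/- Let f : ℕ → ℝ be multiplicative with f(n)² ≤ 1 for all n ≥ 1, and suppose that for some prime q, ∑_{k=0}^∞ f(q^k)/q^k = 0. Then q = 2 and f(2^k) = −1 for all k ≥ 1. -/
theorem stmt_16 (f : ℕ → ℝ)
    (hmul : f 1 = 1 ∧ ∀ m n : ℕ, Nat.Coprime m n → f (m * n) = f m * f n)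
    (hsq : ∀ n : ℕ, 1 ≤ n → f n ^ 2 ≤ 1)
    (q : ℕ) (hq : q.Prime)
    (hz : ∑' k : ℕ, f (q ^ k) / (q : ℝ) ^ k = 0) :
    q = 2 ∧ ∀ k : ℕ, 1 ≤ k → f (2 ^ k) = -1 := by
  obtain ⟨h1, hmul⟩ := hmul
  have hq2 : 2 ≤ q := hq.two_le
  have hqR : (1:ℝ) < q := by exact_mod_cast Nat.lt_of_lt_of_le one_lt_two hq2
  have hqpos : (0:ℝ) < q := lt_trans one_pos hqR
  have habs : ∀ k : ℕ, |f (q ^ k)| ≤ 1 := by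
    intro k
    have hk : 1 ≤ q ^ k := Nat.one_le_pow _ _ hq.pos
    have := hsq (q ^ k) hk
    rwa [sq_le_one_iff_abs_le_one] at this
  set g : ℕ → ℝ := fun k => f (q ^ k) / (q : ℝ) ^ k with hg
  have hr0 : (0:ℝ) ≤ 1 / q := by positivity
  have hr1 : (1:ℝ) / q < 1 := by
    rw [div_lt_one hqpos]; exact hqR
  have hgle : ∀ k, |g k| ≤ (1 / q : ℝ) ^ k := by
    intro k
    have hpk : (0:ℝ) < (q:ℝ) ^ k := by positivity
    rw [hg]
    simp only [abs_div, abs_of_pos hpk, div_pow, one_pow]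
    gcongr
    exact habs k
  have hgeo : Summable (fun k : ℕ => (1 / q : ℝ) ^ k) :=
    summable_geometric_of_lt_one hr0 hr1
  have hsumabs : Summable (fun k => |g k|) :=
    Summable.of_nonneg_of_le (fun _ => abs_nonneg _) hgle hgeo
  have hsum : Summable g := hsumabs.of_abs
  have hg0 : g 0 = 1 := by simp [hg, h1]
  have hzg : ∑' k, g k = 0 := hz
  have htail : ∑' k, g (k + 1) = -1 := by
    have := Summable.tsum_eq_zero_add hsum
    rw [hzg, hg0] at this
    linarith
  have hsumtail : Summable (fun k => g (k + 1)) := by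
    exact (summable_nat_add_iff 1).2 hsum
  have hgeotail : Summable (fun k : ℕ => (1 / q : ℝ) ^ (k + 1)) := by
    exact (summable_nat_add_iff 1).2 hgeo
  have hgeosum : ∑' k : ℕ, (1 / q : ℝ) ^ k = (1 - 1 / (q:ℝ))⁻¹ :=
    tsum_geometric_of_lt_one hr0 hr1
  have hqne : (q:ℝ) ≠ 0 := ne_of_gt hqpos
  have hq1ne : (q:ℝ) - 1 ≠ 0 := by
    intro h; nlinarith
  have h1q : (1:ℝ) - 1 / q ≠ 0 := by
    intro h
    have : (1:ℝ) / q = 1 := by linarith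
    rw [this] at hr1; exact lt_irrefl _ hr1
  have hgeotailsum : ∑' k : ℕ, (1 / q : ℝ) ^ (k + 1) = 1 / ((q : ℝ) - 1) := by
    have h := Summable.tsum_eq_zero_add hgeo
    rw [hgeosum, pow_zero] at h
    have hx : ∑' k : ℕ, (1 / (q:ℝ)) ^ (k + 1) = (1 - 1 / (q:ℝ))⁻¹ - 1 := by linarith
    rw [hx]
    field_simp
    ring
  -- bound: 1 = |tail sum| ≤ 1/(q-1)
  have hbound : (1:ℝ) ≤ 1 / ((q:ℝ) - 1) := by
    have hs2 : Summable (fun k => |g (k + 1)|) :=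
      (summable_nat_add_iff (f := fun k => |g k|) 1).2 hsumabs
    have h2 : ∑' k, |g (k + 1)| ≤ ∑' k : ℕ, (1 / q : ℝ) ^ (k + 1) :=
      Summable.tsum_le_tsum (fun k => hgle (k + 1)) hs2 hgeotail
    rw [hgeotailsum] at h2
    calc (1:ℝ) = |(-1 : ℝ)| := by norm_num
      _ = |∑' k, g (k + 1)| := by rw [htail]
      _ ≤ ∑' k, |g (k + 1)| := by
          simpa [Real.norm_eq_abs] using
            norm_tsum_le_tsum_norm (f := fun k => g (k + 1))
              (by simpa [Real.norm_eq_abs] using hs2)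
      _ ≤ 1 / ((q:ℝ) - 1) := h2
  have hqle : (q:ℝ) ≤ 2 := by
    have hq1 : (0:ℝ) < (q:ℝ) - 1 := by linarith
    rw [le_div_iff₀ hq1, one_mul] at hbound
    linarith
  have hqeq : q = 2 := le_antisymm (by exact_mod_cast hqle) hq2
  subst hqeq
  refine ⟨rfl, ?_⟩
  -- equality case: each g (k+1) = -(1/2)^(k+1)
  have heach : ∀ k : ℕ, g (k + 1) = -((1 / 2 : ℝ) ^ (k + 1)) := by
    by_contra hcon
    push_neg at hcon
    obtain ⟨j, hj⟩ := hcon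
    have hlt : -((1 / 2 : ℝ) ^ (j + 1)) < g (j + 1) := by
      have := hgle (j + 1)
      rw [abs_le] at this
      rcases lt_or_eq_of_le this.1 with h | h
      · exact_mod_cast h
      · exfalso; apply hj; rw [← h]; norm_num
    have hle : ∀ k, -((1 / 2 : ℝ) ^ (k + 1)) ≤ g (k + 1) := by
      intro k
      have := hgle (k + 1)
      rw [abs_le] at this
      exact_mod_cast this.1
    have hgeotail2 : Summable (fun k : ℕ => -((1 / 2 : ℝ) ^ (k + 1))) := by
      apply Summable.neg
      have : ((2:ℕ):ℝ) = 2 := by norm_num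
      rw [this] at hgeotail
      convert hgeotail using 2
    have hstrict := Summable.tsum_lt_tsum hle hlt hgeotail2 hsumtail
    rw [htail] at hstrict
    have : ∑' k : ℕ, -((1 / 2 : ℝ) ^ (k + 1)) = -1 := by
      rw [tsum_neg]
      have h2 : ∑' k : ℕ, (1 / (2:ℝ)) ^ (k + 1) = 1 := by
        have := hgeotailsum
        norm_num at this
        convert this using 2 <;> norm_num
      rw [h2]
    rw [this] at hstrict
    exact lt_irrefl _ hstrict
  intro k hk
  obtain ⟨j, rfl⟩ := Nat.exists_eq_add_of_le hk
  have := heach j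
  rw [hg] at this
  simp only at this
  have h2k : ((2:ℕ):ℝ) ^ (1 + j) = (2:ℝ) ^ (1 + j) := by norm_num
  have hrw : 1 + j = j + 1 := by ring
  rw [hrw] at *
  have hpow : (0:ℝ) < (2:ℝ) ^ (j + 1) := by positivity
  have : f (2 ^ (j + 1)) / (2:ℝ) ^ (j + 1) = -((1 / 2 : ℝ) ^ (j + 1)) := by
    rw [← this]; norm_num
  field_simp at this
  linarith [this, show (2:ℝ) ^ (j + 1) * (1 / 2) ^ (j + 1) = 1 by rw [← mul_pow]; norm_num]
end

section
/- Let f : ℕ → ℂ be the multiplicative function defined by f(p^k) = 1 for all primes p ≠ 3 and all k ≥ 1, and at powers of 3 by f(3) = 2, f(9) = −15, and f(3^k) = 0 for all k ≥ 3. Then f has period 27, f(27) = 0, and f has bounded partial sums. -/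
/-- `f` has bounded partial sums. -/
def HasBoundedPartialSums (f : ℕ → ℂ) : Prop :=
  ∃ C : ℝ, 0 < C ∧ ∀ N : ℕ, 1 ≤ N → ‖∑ n ∈ Finset.Icc 1 N, f n‖ ≤ C

/-- explicit formula -/
noncomputable def Efun (n : ℕ) : ℂ :=
  if ¬ (3 ∣ n) then 1 else if ¬ (9 ∣ n) then 2 else if ¬ (27 ∣ n) then -15 else 0

theorem stmt_18 (f : ℕ → ℂ)
    (hmul : IsMultiplicativeFn f)
    (hfp : ∀ p : ℕ, p.Prime → p ≠ 3 → ∀ k : ℕ, 1 ≤ k → f (p ^ k) = 1)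
    (hf3 : f 3 = 2) (hf9 : f 9 = -15)
    (hf3k : ∀ k : ℕ, 3 ≤ k → f (3 ^ k) = 0) :
    (∀ n : ℕ, 1 ≤ n → f (n + 27) = f n) ∧ f 27 = 0 ∧ HasBoundedPartialSums f := by
  -- f m = 1 for m coprime to 3
  have aux1 : ∀ n : ℕ, ¬ (3 ∣ n) → f n = 1 := by
    intro n
    induction n using Nat.recOnPosPrimePosCoprime with
    | prime_pow p k hp hk =>
      intro h
      exact hfp p hp (by rintro rfl; exact h (dvd_pow_self 3 hk.ne')) k hk
    | zero => intro h; exact absurd (dvd_zero 3) h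
    | one => intro _; exact hmul.1
    | coprime a b ha hb hab iha ihb =>
      intro h
      rw [hmul.2 a b hab, iha (fun d => h (d.mul_right b)),
        ihb (fun d => h (d.mul_left a)), one_mul]
  have h3 : Nat.Prime 3 := by norm_num
  -- value at powers of 3
  have hg : ∀ k : ℕ, f (3 ^ k) =
      (if k = 0 then 1 else if k = 1 then 2 else if k = 2 then -15 else 0) := by
    intro k
    match k with
    | 0 => simpa using hmul.1
    | 1 => simpa using hf3
    | 2 => simpa using hf9
    | (n+3) => simpa using hf3k (n+3) (by omega)
  -- main formula
  have hE : ∀ n : ℕ, 1 ≤ n → f n = Efun n := by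
    intro n hn
    have hn0 : n ≠ 0 := by omega
    set k := n.factorization 3 with hk
    have hsplit : 3 ^ k * (n / 3 ^ k) = n := Nat.ordProj_mul_ordCompl_eq_self n 3
    have hcop : Nat.Coprime (3 ^ k) (n / 3 ^ k) :=
      Nat.Coprime.pow_left _ (Nat.coprime_ordCompl h3 hn0)
    have h1 : f n = f (3 ^ k) := by
      rw [← hsplit, hmul.2 _ _ hcop,
        aux1 _ (fun d => Nat.not_dvd_ordCompl h3 hn0 d), mul_one]
    have d1 : 3 ∣ n ↔ 1 ≤ k := by
      simpa using (Nat.Prime.pow_dvd_iff_le_factorization (k := 1) h3 hn0)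
    have d2 : 9 ∣ n ↔ 2 ≤ k := by
      have := (Nat.Prime.pow_dvd_iff_le_factorization (k := 2) h3 hn0)
      norm_num at this; simpa using this
    have d3 : 27 ∣ n ↔ 3 ≤ k := by
      have := (Nat.Prime.pow_dvd_iff_le_factorization (k := 3) h3 hn0)
      norm_num at this; simpa using this
    rw [h1, hg, Efun]
    simp only [d1, d2, d3]
    split_ifs <;> first | rfl | omega
  -- periodicity
  have hper : ∀ n : ℕ, 1 ≤ n → f (n + 27) = f n := by
    intro n hn
    rw [hE n hn, hE (n + 27) (by omega), Efun, Efun]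
    have p1 : 3 ∣ n + 27 ↔ 3 ∣ n := by omega
    have p2 : 9 ∣ n + 27 ↔ 9 ∣ n := by omega
    have p3 : 27 ∣ n + 27 ↔ 27 ∣ n := by omega
    simp only [p1, p2, p3]
  refine ⟨hper, by simpa using hf3k 3 le_rfl, ?_⟩
  -- sum over the first period is 0
  have hS27 : ∑ n ∈ Finset.Icc 1 27, f n = 0 := by
    have : ∀ n ∈ Finset.Icc 1 27, f n = Efun n := by
      intro n hn
      exact hE n (Finset.mem_Icc.mp hn).1
    rw [Finset.sum_congr rfl this]
    norm_num [Finset.sum_Icc_succ_top, Efun]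
  -- block sums vanish
  have hsb : ∀ a b : ℕ, a + 1 ≤ b → ∑ n ∈ Finset.Icc (a + 1) b, f n
      = f (a + 1) + ∑ n ∈ Finset.Icc (a + 2) b, f n := by
    intro a b hab
    rw [Finset.Icc_eq_cons_Ioc hab, Finset.sum_cons, ← Finset.Icc_add_one_left_eq_Ioc]
    rfl
  have hblock : ∀ N : ℕ, ∑ n ∈ Finset.Icc (N + 1) (N + 27), f n = 0 := by
    intro N
    induction N with
    | zero => simpa using hS27
    | succ m ih =>
      have h1 : ∑ n ∈ Finset.Icc (m + 1 + 1) (m + 1 + 27), f n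
          = (∑ n ∈ Finset.Icc (m + 2) (m + 27), f n) + f (m + 28) := by
        rw [show m + 1 + 27 = (m + 27) + 1 by ring,
          Finset.sum_Icc_succ_top (by omega : m + 1 + 1 ≤ m + 27 + 1)]
      rw [h1, show m + 28 = (m + 1) + 27 by ring, hper (m + 1) (by omega)]
      rw [hsb m (m + 27) (by omega)] at ih
      linear_combination ih
  -- shift invariance of partial sums
  have hshift : ∀ N : ℕ, ∑ n ∈ Finset.Icc 1 (N + 27), f n = ∑ n ∈ Finset.Icc 1 N, f n := by
    intro N
    have h0 : ∀ M : ℕ, Finset.Icc 1 M = Finset.Ioc 0 M := fun M => Finset.Icc_add_one_left_eq_Ioc 0 M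
    rw [h0, h0, ← Finset.sum_Ioc_consecutive _ (by omega : 0 ≤ N) (by omega : N ≤ N + 27)]
    have : Finset.Ioc N (N + 27) = Finset.Icc (N + 1) (N + 27) := (Finset.Icc_add_one_left_eq_Ioc _ _).symm
    rw [this, hblock N, add_zero]
  -- pointwise bound
  have hnb : ∀ n : ℕ, 1 ≤ n → ‖f n‖ ≤ 15 := by
    intro n hn
    rw [hE n hn, Efun]
    split_ifs <;> norm_num
  refine ⟨405, by norm_num, ?_⟩
  intro N _
  induction N using Nat.strong_induction_on with
  | _ N ih =>
    by_cases hN : N ≤ 27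
    · calc ‖∑ n ∈ Finset.Icc 1 N, f n‖ ≤ ∑ n ∈ Finset.Icc 1 N, ‖f n‖ := norm_sum_le _ _
        _ ≤ ∑ n ∈ Finset.Icc 1 N, (15 : ℝ) := by
            apply Finset.sum_le_sum
            intro i hi
            exact hnb i (Finset.mem_Icc.mp hi).1
        _ = N * 15 := by rw [Finset.sum_const, Nat.card_Icc]; simp [mul_comm]
        _ ≤ 405 := by
            have : (N : ℝ) ≤ 27 := by exact_mod_cast hN
            linarith
    · have hN' : N = (N - 27) + 27 := by omega
      rw [hN', hshift]
      exact ih (N - 27) (by omega) (by omega)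
end

section
/- Let f : ℕ → ℂ be the multiplicative function defined by f(p^k) = 1 for all primes p ≠ 5 and all k ≥ 1, and at powers of 5 by f(5) = π and f(5^k) = −20 − 4π for all k ≥ 2. Then f has period 25, f(25) ≠ 0, and f has bounded partial sums. -/
noncomputable def Gaux : ℕ → ℝ := fun n =>
  if 25 ∣ n then -20 - 4 * Real.pi else if 5 ∣ n then Real.pi else 1

lemma Gaux_abs_le (n : ℕ) : |Gaux n| ≤ 20 + 4 * Real.pi := by
  have hπ := Real.pi_pos
  unfold Gaux
  split_ifs <;> rw [abs_le] <;> constructor <;> linarith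

lemma Gaux_per (n : ℕ) : Gaux (n + 25) = Gaux n := by
  have h1 : (25 ∣ n + 25) ↔ 25 ∣ n := by omega
  have h2 : (5 ∣ n + 25) ↔ 5 ∣ n := by omega
  simp only [Gaux, h1, h2]

lemma faux_eq_one (f : ℕ → ℂ) (hmul : IsMultiplicativeFn f)
    (hfp : ∀ p : ℕ, p.Prime → p ≠ 5 → ∀ k : ℕ, 1 ≤ k → f (p ^ k) = 1) :
    ∀ n : ℕ, 0 < n → ¬ (5 ∣ n) → f n = 1 := by
  intro n
  induction n using Nat.strong_induction_on with
  | _ n ih =>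
    intro hn h5
    rcases Nat.lt_or_ge n 2 with h2 | h2
    · interval_cases n
      exact hmul.1
    · set p := n.minFac with hp_def
      have hp : p.Prime := Nat.minFac_prime (by omega)
      have hpd : p ∣ n := Nat.minFac_dvd n
      have hp5 : p ≠ 5 := fun h => h5 (h ▸ hpd)
      have hne : n ≠ 0 := by omega
      set k := n.factorization p with hk_def
      have hk : 1 ≤ k := hp.factorization_pos_of_dvd hne hpd
      have hsplit : p ^ k * (n / p ^ k) = n := Nat.ordProj_mul_ordCompl_eq_self n p
      have hcop : Nat.Coprime (p ^ k) (n / p ^ k) :=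
        Nat.Coprime.pow_left _ (Nat.coprime_ordCompl hp hne)
      have hmd : (n / p ^ k) ∣ n := Nat.ordCompl_dvd n p
      have hmpos : 0 < n / p ^ k := Nat.ordCompl_pos p hne
      have hmlt : n / p ^ k < n := Nat.div_lt_self hn (Nat.one_lt_pow (by omega) hp.one_lt)
      have h5m : ¬ (5 ∣ n / p ^ k) := fun h => h5 (h.trans hmd)
      calc f n = f (p ^ k * (n / p ^ k)) := by rw [hsplit]
        _ = f (p ^ k) * f (n / p ^ k) := hmul.2 _ _ hcop
        _ = 1 := by rw [hfp p hp hp5 k hk, ih _ hmlt hmpos h5m, one_mul]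

lemma faux_val (f : ℕ → ℂ) (hmul : IsMultiplicativeFn f)
    (hfp : ∀ p : ℕ, p.Prime → p ≠ 5 → ∀ k : ℕ, 1 ≤ k → f (p ^ k) = 1)
    (hf5 : f 5 = (Real.pi : ℂ))
    (hf5k : ∀ k : ℕ, 2 ≤ k → f (5 ^ k) = -20 - 4 * (Real.pi : ℂ)) :
    ∀ n : ℕ, 0 < n → f n = ((Gaux n : ℝ) : ℂ) := by
  intro n hn
  have hne : n ≠ 0 := hn.ne'
  have h5p : Nat.Prime 5 := by norm_num
  set v := n.factorization 5 with hv
  have hsplit : 5 ^ v * (n / 5 ^ v) = n := Nat.ordProj_mul_ordCompl_eq_self n 5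
  have hcop : Nat.Coprime (5 ^ v) (n / 5 ^ v) :=
    Nat.Coprime.pow_left _ (Nat.coprime_ordCompl h5p hne)
  have hm1 : f (n / 5 ^ v) = 1 :=
    faux_eq_one f hmul hfp _ (Nat.ordCompl_pos 5 hne) (Nat.not_dvd_ordCompl h5p hne)
  have hfn : f n = f (5 ^ v) := by
    conv_lhs => rw [← hsplit]
    rw [hmul.2 _ _ hcop, hm1, mul_one]
  have hdvd5 : 5 ∣ n ↔ 1 ≤ v := by
    rw [hv, ← Nat.Prime.pow_dvd_iff_le_factorization h5p hne, pow_one]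
  have hdvd25 : 25 ∣ n ↔ 2 ≤ v := by
    rw [hv, ← Nat.Prime.pow_dvd_iff_le_factorization h5p hne]
    norm_num
  unfold Gaux
  rcases Nat.lt_or_ge v 2 with h | h
  · have h25 : ¬ 25 ∣ n := fun hc => by have := hdvd25.mp hc; omega
    rcases Nat.lt_or_ge v 1 with h0 | h0
    · have hv0 : v = 0 := by omega
      have h5n : ¬ 5 ∣ n := fun hc => by have := hdvd5.mp hc; omega
      rw [if_neg h25, if_neg h5n, hfn, hv0, pow_zero, hmul.1]
      norm_num
    · have hv1 : v = 1 := by omega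
      rw [if_neg h25, if_pos (hdvd5.mpr h0), hfn, hv1, pow_one, hf5]
  · rw [if_pos (hdvd25.mpr h), hfn, hf5k v h]
    push_cast
    ring

lemma block_sum : ∑ n ∈ Finset.Icc 1 25, ((Gaux n : ℝ) : ℂ) = 0 := by
  have h : Finset.Icc 1 25 = (Finset.range 25).map ⟨fun i => i + 1, add_left_injective 1⟩ := by
    ext x
    simp only [Finset.mem_Icc, Finset.mem_map, Finset.mem_range, Function.Embedding.coeFn_mk]
    constructor
    · intro hx; exact ⟨x - 1, by omega, by omega⟩
    · rintro ⟨a, ha, rfl⟩; omega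
  rw [h, Finset.sum_map]
  simp only [Function.Embedding.coeFn_mk]
  norm_num [Finset.sum_range_succ, Gaux]
  ring

lemma partial_bound : ∀ N : ℕ, ‖∑ n ∈ Finset.Icc 1 N, ((Gaux n : ℝ) : ℂ)‖ ≤ 25 * (20 + 4 * Real.pi) := by
  intro N
  induction N using Nat.strong_induction_on with
  | _ N ih =>
    rcases Nat.lt_or_ge N 26 with h | h
    · calc ‖∑ n ∈ Finset.Icc 1 N, ((Gaux n : ℝ) : ℂ)‖
          ≤ ∑ n ∈ Finset.Icc 1 N, ‖((Gaux n : ℝ) : ℂ)‖ := norm_sum_le _ _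
        _ ≤ ∑ _n ∈ Finset.Icc 1 N, (20 + 4 * Real.pi) := by
            refine Finset.sum_le_sum fun n _ => ?_
            rw [Complex.norm_real]
            exact Gaux_abs_le n
        _ = (Finset.Icc 1 N).card * (20 + 4 * Real.pi) := by
            rw [Finset.sum_const, nsmul_eq_mul]
        _ ≤ 25 * (20 + 4 * Real.pi) := by
            have hc : (Finset.Icc 1 N).card ≤ 25 := by rw [Nat.card_Icc]; omega
            have hpos : (0:ℝ) ≤ 20 + 4 * Real.pi := by linarith [Real.pi_pos]
            exact mul_le_mul_of_nonneg_right (by exact_mod_cast hc) hpos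
    · have hIcc : ∀ M : ℕ, Finset.Ioc 0 M = Finset.Icc 1 M := by
        intro M; ext x; simp only [Finset.mem_Ioc, Finset.mem_Icc]; omega
      have hsplit : (∑ n ∈ Finset.Ioc 0 25, ((Gaux n : ℝ) : ℂ))
          + ∑ n ∈ Finset.Ioc 25 N, ((Gaux n : ℝ) : ℂ)
          = ∑ n ∈ Finset.Ioc 0 N, ((Gaux n : ℝ) : ℂ) :=
        Finset.sum_Ioc_consecutive _ (by omega) (by omega)
      have hmap : Finset.Ioc 25 N = (Finset.Ioc 0 (N - 25)).map ⟨fun i => i + 25, add_left_injective 25⟩ := by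
        ext x
        simp only [Finset.mem_Ioc, Finset.mem_map, Function.Embedding.coeFn_mk]
        constructor
        · intro hx; exact ⟨x - 25, by omega, by omega⟩
        · rintro ⟨a, ha, rfl⟩; omega
      have hshift : ∑ n ∈ Finset.Ioc 25 N, ((Gaux n : ℝ) : ℂ)
          = ∑ n ∈ Finset.Icc 1 (N - 25), ((Gaux n : ℝ) : ℂ) := by
        rw [hmap, Finset.sum_map, ← hIcc]
        simp only [Function.Embedding.coeFn_mk]
        exact Finset.sum_congr rfl fun n _ => by rw [Gaux_per]
      have hkey : ∑ n ∈ Finset.Icc 1 N, ((Gaux n : ℝ) : ℂ)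
          = ∑ n ∈ Finset.Icc 1 (N - 25), ((Gaux n : ℝ) : ℂ) := by
        rw [← hIcc N, ← hsplit, hIcc 25, block_sum, zero_add, hshift]
      rw [hkey]
      exact ih _ (by omega)

theorem stmt_19 (f : ℕ → ℂ)
    (hmul : IsMultiplicativeFn f)
    (hfp : ∀ p : ℕ, p.Prime → p ≠ 5 → ∀ k : ℕ, 1 ≤ k → f (p ^ k) = 1)
    (hf5 : f 5 = (Real.pi : ℂ))
    (hf5k : ∀ k : ℕ, 2 ≤ k → f (5 ^ k) = -20 - 4 * (Real.pi : ℂ)) :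
    (∀ n : ℕ, 1 ≤ n → f (n + 25) = f n) ∧ f 25 ≠ 0 ∧ HasBoundedPartialSums f := by
  have hfeq : ∀ n : ℕ, 0 < n → f n = ((Gaux n : ℝ) : ℂ) := faux_val f hmul hfp hf5 hf5k
  refine ⟨?_, ?_, ?_⟩
  · intro n hn
    rw [hfeq n hn, hfeq (n + 25) (by omega), Gaux_per]
  · have h25 : f 25 = -20 - 4 * (Real.pi : ℂ) := by
      have h := hf5k 2 le_rfl
      norm_num at h
      exact h
    rw [h25]
    intro hcontra
    have h' : ((-20 - 4 * Real.pi : ℝ) : ℂ) = 0 := by push_cast; linear_combination hcontra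
    rw [Complex.ofReal_eq_zero] at h'
    linarith [Real.pi_pos]
  · refine ⟨25 * (20 + 4 * Real.pi), by nlinarith [Real.pi_pos], ?_⟩
    intro N _
    have heq : ∑ n ∈ Finset.Icc 1 N, f n = ∑ n ∈ Finset.Icc 1 N, ((Gaux n : ℝ) : ℂ) :=
      Finset.sum_congr rfl fun n hn => hfeq n (by simp only [Finset.mem_Icc] at hn; omega)
    rw [heq]
    exact partial_bound N
end
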